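/- Let U ⊆ ℂ be a domain and let H be analytic on U with H′ zero-free on U; set δ = H″/H′ and let k ∈ ℕ. Define the differential operator M_k = (D + δ)∘(D + 2δ)∘⋯∘(D + kδ), where D = d/dz and (D + jδ)[w] = w′ + jδw. Then: (a) for every open set V ⊆ ℂ containing H(U) and every analytic φ on V, one has M_k[(H′)^{−k}·(φ∘H)] = φ^{(k)}∘H on U; in particular (b) M_k[(H′)^{−k}·e^{H}] = e^{H} on U; (c) if in addition H is zero-free on U and m ∈ ℕ, then M_k[(H′)^{−k}·H^{−m}] = (−1)^k·m(m+1)⋯(m+k−1)·H^{−m−k} on U; and (d) M_k[(H′)^{−k}·(P∘H)] = 0 on U for every polynomial P of degree at most k−1. -/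

import Mathlib

/-- The differential operator `M_k = (D + δ)∘(D + 2δ)∘⋯∘(D + kδ)`,
where `(D + jδ)[w] = w' + jδw`. -/
noncomputable def Mk (δ : ℂ → ℂ) : ℕ → (ℂ → ℂ) → ℂ → ℂ
  | 0, w => w
  | j + 1, w => Mk δ j (fun z => deriv w z + ((j : ℂ) + 1) * δ z * w z)

/-- `Mk` is a local operator: it only depends on the values of its argument on an
open set. -/
lemma Mk_congr (δ : ℂ → ℂ) (U : Set ℂ) (hU : IsOpen U) :
    ∀ j (f g : ℂ → ℂ), (∀ z ∈ U, f z = g z) → ∀ z ∈ U, Mk δ j f z = Mk δ j g z := by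
  intro j
  induction j with
  | zero => intro f g h z hz; exact h z hz
  | succ j ih =>
    intro f g h z hz
    refine ih _ _ (fun w hw => ?_) z hz
    have hd : deriv f w = deriv g w :=
      Filter.EventuallyEq.deriv_eq (Filter.eventuallyEq_of_mem (hU.mem_nhds hw) h)
    rw [hd, h w hw]

/-- Main identity: `M_j[(H')^{-j} φ(H)] = φ^{(j)} ∘ H` on `U`. -/
lemma Mk_main (U : Set ℂ) (hUo : IsOpen U)
    (H : ℂ → ℂ) (hH : DifferentiableOn ℂ H U)
    (hH' : ∀ z ∈ U, deriv H z ≠ 0)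
    (V : Set ℂ) (hVo : IsOpen V) (hV : H '' U ⊆ V) (j : ℕ) :
    ∀ φ : ℂ → ℂ, DifferentiableOn ℂ φ V →
      ∀ z ∈ U, Mk (fun w => iteratedDeriv 2 H w / deriv H w) j
        (fun w => (deriv H w)⁻¹ ^ j * φ (H w)) z = iteratedDeriv j φ (H z) := by
  have hHa : AnalyticOnNhd ℂ H U := hH.analyticOnNhd hUo
  have hH'a : AnalyticOnNhd ℂ (deriv H) U := hHa.deriv
  induction j with
  | zero => intro φ hφ z hz; simp [Mk, iteratedDeriv_zero]
  | succ j ih =>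
    intro φ hφ z hz
    have hφ' : DifferentiableOn ℂ (deriv φ) V :=
      ((hφ.analyticOnNhd hVo).deriv).differentiableOn
    show Mk _ j _ z = _
    have key : ∀ w ∈ U,
        (deriv (fun w => (deriv H w)⁻¹ ^ (j+1) * φ (H w)) w
          + ((j : ℂ) + 1) * (iteratedDeriv 2 H w / deriv H w)
            * ((deriv H w)⁻¹ ^ (j+1) * φ (H w)))
        = (deriv H w)⁻¹ ^ j * (deriv φ) (H w) := by
      intro w hw
      have hg : deriv H w ≠ 0 := hH' w hw
      have hHw : DifferentiableAt ℂ H w := (hHa w hw).differentiableAt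
      have hgd : DifferentiableAt ℂ (deriv H) w := (hH'a w hw).differentiableAt
      have hφw : DifferentiableAt ℂ φ (H w) :=
        (hφ.differentiableAt (hVo.mem_nhds (hV ⟨w, hw, rfl⟩)))
      have h1 : HasDerivAt (deriv H) (deriv (deriv H) w) w := hgd.hasDerivAt
      have h2 : HasDerivAt (fun z => (deriv H z)⁻¹)
          (-(deriv (deriv H) w) / (deriv H w) ^ 2) w := h1.inv hg
      have h3 : HasDerivAt (fun z => (deriv H z)⁻¹ ^ (j+1))
          ((j+1 : ℕ) * (deriv H w)⁻¹ ^ j * (-(deriv (deriv H) w) / (deriv H w) ^ 2)) w := by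
        simpa using h2.fun_pow (j+1)
      have h4 : HasDerivAt (fun z => φ (H z)) (deriv φ (H w) * deriv H w) w :=
        (hφw.hasDerivAt).comp w hHw.hasDerivAt
      have h5 := (h3.fun_mul h4).deriv
      rw [h5]
      have h2H : iteratedDeriv 2 H w = deriv (deriv H) w := by
        rw [iteratedDeriv_succ, iteratedDeriv_one]
      rw [h2H]
      have hab : deriv H w * (deriv H w)⁻¹ = 1 := mul_inv_cancel₀ hg
      push_cast
      rw [div_eq_mul_inv, div_eq_mul_inv, sq, mul_inv]
      linear_combination (deriv φ (H w) * (deriv H w)⁻¹ ^ j) * hab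
    rw [Mk_congr _ U hUo j _ _ key z hz,
      ih (deriv φ) hφ' z hz, ← iteratedDeriv_succ']

lemma prod_neg_shift (m k : ℕ) :
    (∏ i ∈ Finset.range k, (-(m : ℂ) - (i : ℂ)))
      = (-1) ^ k * ∏ i ∈ Finset.range k, ((m : ℂ) + (i : ℂ)) := by
  induction k with
  | zero => simp
  | succ k ih => rw [Finset.prod_range_succ, Finset.prod_range_succ, ih]; ring

lemma iteratedDeriv_poly (k : ℕ) (P : Polynomial ℂ) :
    iteratedDeriv k (fun y => P.eval y) = fun y => (Polynomial.derivative^[k] P).eval y := by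
  induction k generalizing P with
  | zero => simp
  | succ k ih =>
    rw [iteratedDeriv_succ']
    have : deriv (fun y => P.eval y) = fun y => P.derivative.eval y := by
      funext y; exact P.deriv
    rw [this, ih, Function.iterate_succ_apply]

/-- the operator identities of Example I / display (Brurep5): with
`δ = H''/H'` and `M_k = (D + δ)∘⋯∘(D + kδ)`, applying `M_k` to `(H')^{−k} φ(H)`
amounts to differentiating `φ` `k` times with respect to `H`; in particular
`M_k[(H')^{−k}e^H] = e^H`, `M_k[(H')^{−k}H^{−m}] = (−1)^k m(m+1)⋯(m+k−1) H^{−m−k}`,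
and `M_k[(H')^{−k}P(H)] = 0` for polynomials `P` of degree at most `k−1`. -/
theorem Mk_operator_identities
    (U : Set ℂ) (hUo : IsOpen U) (hUc : IsConnected U)
    (H : ℂ → ℂ) (hH : DifferentiableOn ℂ H U)
    (hH' : ∀ z ∈ U, deriv H z ≠ 0)
    (k : ℕ) (hk : 1 ≤ k) :
    (∀ V : Set ℂ, IsOpen V → H '' U ⊆ V → ∀ φ : ℂ → ℂ, DifferentiableOn ℂ φ V →
        ∀ z ∈ U, Mk (fun w => iteratedDeriv 2 H w / deriv H w) k
            (fun w => (deriv H w)⁻¹ ^ k * φ (H w)) z = iteratedDeriv k φ (H z)) ∧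
    (∀ z ∈ U, Mk (fun w => iteratedDeriv 2 H w / deriv H w) k
        (fun w => (deriv H w)⁻¹ ^ k * Complex.exp (H w)) z = Complex.exp (H z)) ∧
    ((∀ z ∈ U, H z ≠ 0) → ∀ m : ℕ, 1 ≤ m →
        ∀ z ∈ U, Mk (fun w => iteratedDeriv 2 H w / deriv H w) k
            (fun w => (deriv H w)⁻¹ ^ k * (H w)⁻¹ ^ m) z
          = (-1) ^ k * (∏ i ∈ Finset.range k, ((m : ℂ) + (i : ℂ))) * (H z)⁻¹ ^ (m + k)) ∧
    (∀ P : Polynomial ℂ, P.degree < (k : ℕ) →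
        ∀ z ∈ U, Mk (fun w => iteratedDeriv 2 H w / deriv H w) k
            (fun w => (deriv H w)⁻¹ ^ k * P.eval (H w)) z = 0) := by
  refine ⟨fun V hVo hV φ hφ => Mk_main U hUo H hH hH' V hVo hV k φ hφ, ?_, ?_, ?_⟩
  · -- exponential
    intro z hz
    have := Mk_main U hUo H hH hH' Set.univ isOpen_univ (Set.subset_univ _) k
      Complex.exp Complex.differentiable_exp.differentiableOn z hz
    rw [this, iteratedDeriv_eq_iterate, Complex.iter_deriv_exp]
  · -- negative powers of H
    intro hH0 m hm z hz
    have hV : H '' U ⊆ {x : ℂ | x ≠ 0} := by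
      rintro _ ⟨w, hw, rfl⟩; exact hH0 w hw
    have hφ : DifferentiableOn ℂ (fun y : ℂ => y⁻¹ ^ m) {x : ℂ | x ≠ 0} :=
      (differentiableOn_inv.pow m)
    have := Mk_main U hUo H hH hH' {x : ℂ | x ≠ 0} isOpen_ne hV k
      (fun y : ℂ => y⁻¹ ^ m) hφ z hz
    rw [this]
    have hφeq : (fun y : ℂ => y⁻¹ ^ m) = fun y : ℂ => y ^ (-(m : ℤ)) := by
      funext y; rw [zpow_neg, zpow_natCast, inv_pow]
    rw [hφeq, iteratedDeriv_eq_iterate, iter_deriv_zpow]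
    have he : (-(m : ℤ) - (k : ℤ)) = -(((m + k : ℕ) : ℤ)) := by push_cast; ring
    rw [he, zpow_neg, zpow_natCast, ← inv_pow]
    push_cast
    rw [prod_neg_shift]
  · -- polynomials of degree < k
    intro P hP z hz
    have := Mk_main U hUo H hH hH' Set.univ isOpen_univ (Set.subset_univ _) k
      (fun y => P.eval y) (P.differentiable.differentiableOn) z hz
    rw [this, iteratedDeriv_poly]
    have hzero : Polynomial.derivative^[k] P = 0 := by
      by_cases hP0 : P = 0
      · simp [hP0]
      · exact Polynomial.iterate_derivative_eq_zero
          ((Polynomial.natDegree_lt_iff_degree_lt hP0).mpr hP)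
    simp [hzero]
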